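/- Let P and Q be orthogonal projections on a finite-dimensional complex Hilbert space H. Then P Q P = Q P Q if and only if P and Q commute. -/
import Mathlib


open scoped InnerProductSpace

/-- For orthogonal projections `P`, `Q` on a finite-dimensional complex
Hilbert space, `P Q P = Q P Q` iff `P` and `Q` commute. -/
theorem stmt_0 {H : Type*} [NormedAddCommGroup H] [InnerProductSpace ℂ H]
    [FiniteDimensional ℂ H] (P Q : H →ₗ[ℂ] H)
    (hPidem : P ∘ₗ P = P) (hPsa : ∀ x y : H, ⟪P x, y⟫_ℂ = ⟪x, P y⟫_ℂ)
    (hQidem : Q ∘ₗ Q = Q) (hQsa : ∀ x y : H, ⟪Q x, y⟫_ℂ = ⟪x, Q y⟫_ℂ) :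
    P ∘ₗ Q ∘ₗ P = Q ∘ₗ P ∘ₗ Q ↔ P ∘ₗ Q = Q ∘ₗ P := by
  have hP : ∀ x : H, P (P x) = P x := fun x => congrArg (· x) hPidem
  have hQ : ∀ x : H, Q (Q x) = Q x := fun x => congrArg (· x) hQidem
  constructor
  · intro h
    have h' : ∀ x : H, P (Q (P x)) = Q (P (Q x)) := fun x => congrArg (· x) h
    -- A = PQ - QP
    set A : H →ₗ[ℂ] H := P ∘ₗ Q - Q ∘ₗ P with hA
    have hAapp : ∀ x : H, A x = P (Q x) - Q (P x) := fun x => rfl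
    have hAA : ∀ x : H, A (A x) = 0 := by
      intro x
      rw [hAapp, hAapp]
      simp only [map_sub]
      have e1 : P (Q (P (Q x))) = Q (P (Q x)) := by
        rw [h' (Q x), hQ]
      have e2 : P (Q (Q (P x))) = Q (P (Q x)) := by
        rw [hQ, h']
      have e3 : Q (P (P (Q x))) = Q (P (Q x)) := by
        rw [hP]
      have e4 : Q (P (Q (P x))) = P (Q (P x)) := by
        have := h' (P x)
        rw [hP] at this
        rw [← this]
      rw [e1, e2, e3, e4, h']
      abel
    have hAadj : ∀ x y : H, ⟪A x, y⟫_ℂ = ⟪x, -(A y)⟫_ℂ := by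
      intro x y
      rw [hAapp, hAapp]
      rw [inner_sub_left]
      rw [hPsa, hQsa, hQsa, hPsa]
      rw [neg_sub, inner_sub_right]
    have hA0 : ∀ x : H, A x = 0 := by
      intro x
      have : ⟪A x, A x⟫_ℂ = 0 := by
        rw [hAadj, hAA, neg_zero, inner_zero_right]
      exact inner_self_eq_zero.mp this
    have : A = 0 := LinearMap.ext fun x => hA0 x
    have := sub_eq_zero.mp this
    exact this
  · intro h
    have hc : ∀ x : H, P (Q x) = Q (P x) := fun x => congrArg (· x) h
    apply LinearMap.ext
    intro x
    simp only [LinearMap.comp_apply]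
    simp only [hc, hP, hQ]
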